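/- Let δ = 2e_0 - e_1 - ... - e_6 in I_{1,6}, and let s_δ be the reflection s_δ(β) = β + (δ·β)δ acting on the set R of 72 roots. Then the action of the group {id, s_δ} on R has exactly 51 orbits: 1 orbit {δ, -δ}, 20 two-element orbits among the 40 roots ±(e_0 - e_i - e_j - e_k), and 30 fixed points e_i - e_j (i ≠ j). -/

import Mathlib

set_option maxHeartbeats 4000000
set_option maxRecDepth 8000

/-- The intersection form on the lattice I_{1,6} = ℤ^7: diag(1,-1,-1,-1,-1,-1,-1). -/
def Ip (x y : Fin 7 → ℤ) : ℤ := x 0 * y 0 - ∑ i : Fin 6, x i.succ * y i.succ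

/-- The hyperplane class h = 3e₀ - e₁ - ⋯ - e₆. -/
def hcl : Fin 7 → ℤ := ![3, -1, -1, -1, -1, -1, -1]

/-- The standard basis vector e_i of I_{1,6}. -/
def ee (i : Fin 7) : Fin 7 → ℤ := fun j => if j = i then 1 else 0

/-- The vanishing cycle δ = 2e₀ - e₁ - ⋯ - e₆. -/
def δv : Fin 7 → ℤ := ![2, -1, -1, -1, -1, -1, -1]

/-- The 72 roots. -/
def Rset : Set (Fin 7 → ℤ) := {α | Ip α α = -2 ∧ Ip α hcl = 0}

/-- The Picard–Lefschetz reflection s_δ(β) = β + (δ·β)δ. -/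
def sδ (β : Fin 7 → ℤ) : Fin 7 → ℤ := β + Ip δv β • δv

/-- The orbits of the group {id, s_δ} acting on the 72 roots: since s_δ is an involution,
the orbit of a root α is {α, s_δ α}. -/
def Orb : Set (Set (Fin 7 → ℤ)) := {S | ∃ α ∈ Rset, S = {α, sδ α}}

/-! ### Auxiliary material -/

def roots72 : Finset (Fin 7 → ℤ) := {![0, 1, -1, 0, 0, 0, 0], ![0, 1, 0, -1, 0, 0, 0], ![0, 1, 0, 0, -1, 0, 0], ![0, 1, 0, 0, 0, -1, 0], ![0, 1, 0, 0, 0, 0, -1], ![0, -1, 1, 0, 0, 0, 0], ![0, 0, 1, -1, 0, 0, 0], ![0, 0, 1, 0, -1, 0, 0], ![0, 0, 1, 0, 0, -1, 0], ![0, 0, 1, 0, 0, 0, -1], ![0, -1, 0, 1, 0, 0, 0], ![0, 0, -1, 1, 0, 0, 0], ![0, 0, 0, 1, -1, 0, 0], ![0, 0, 0, 1, 0, -1, 0], ![0, 0, 0, 1, 0, 0, -1], ![0, -1, 0, 0, 1, 0, 0], ![0, 0, -1, 0, 1, 0, 0], ![0, 0, 0, -1, 1, 0, 0], ![0, 0,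 0, 0, 1, -1, 0], ![0, 0, 0, 0, 1, 0, -1], ![0, -1, 0, 0, 0, 1, 0], ![0, 0, -1, 0, 0, 1, 0], ![0, 0, 0, -1, 0, 1, 0], ![0, 0, 0, 0, -1, 1, 0], ![0, 0, 0, 0, 0, 1, -1], ![0, -1, 0, 0, 0, 0, 1], ![0, 0, -1, 0, 0, 0, 1], ![0, 0, 0, -1, 0, 0, 1], ![0, 0, 0, 0, -1, 0, 1], ![0, 0, 0, 0, 0, -1, 1], ![1, -1, -1, -1, 0, 0, 0], ![-1, 1, 1, 1, 0, 0, 0], ![1, -1, -1, 0, -1, 0, 0], ![-1, 1, 1, 0, 1, 0, 0], ![1, -1, -1, 0, 0, -1, 0], ![-1, 1, 1, 0, 0, 1, 0], ![1, -1, -1, 0, 0, 0, -1], ![-1, 1, 1, 0, 0, 0, 1], ![1, -1, 0, -1, -1, 0, 0], ![-1, 1, 0, 1, 1, 0, 0], ![1, -1, 0, -1, 0, -1, 0], ![-1, 1, 0, 1, 0, 1, 0], ![1, -1, 0, -1, 0, 0, -1], ![-1, 1, 0, 1, 0, 0, 1], ![1, -1, 0, 0, -1, -1, 0], ![-1, 1,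 0, 0, 1, 1, 0], ![1, -1, 0, 0, -1, 0, -1], ![-1, 1, 0, 0, 1, 0, 1], ![1, -1, 0, 0, 0, -1, -1], ![-1, 1, 0, 0, 0, 1, 1], ![1, 0, -1, -1, -1, 0, 0], ![-1, 0, 1, 1, 1, 0, 0], ![1, 0, -1, -1, 0, -1, 0], ![-1, 0, 1, 1, 0, 1, 0], ![1, 0, -1, -1, 0, 0, -1], ![-1, 0, 1, 1, 0, 0, 1], ![1, 0, -1, 0, -1, -1, 0], ![-1, 0, 1, 0, 1, 1, 0], ![1, 0, -1, 0, -1, 0, -1], ![-1, 0, 1, 0, 1, 0, 1], ![1, 0, -1, 0, 0, -1, -1], ![-1, 0, 1, 0, 0, 1, 1], ![1, 0, 0, -1, -1, -1, 0], ![-1, 0, 0, 1, 1, 1, 0], ![1, 0, 0, -1, -1, 0, -1], ![-1, 0, 0, 1, 1, 0, 1], ![1, 0, 0, -1, 0, -1, -1], ![-1, 0, 0, 1, 0, 1, 1], ![1, 0, 0, 0, -1, -1, -1], ![-1, 0, 0, 0, 1, 1, 1], ![2, -1, -1, -1, -1, -1, -1], ![-2, 1, 1, 1, 1, 1, 1]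}

lemma Ip_eval (x y : Fin 7 → ℤ) :
    Ip x y = x 0 * y 0 - (x 1 * y 1 + x 2 * y 2 + x 3 * y 3 + x 4 * y 4 + x 5 * y 5 + x 6 * y 6) := by
  simp [Ip, Fin.sum_univ_six]

lemma Iph (x : Fin 7 → ℤ) : Ip x hcl = 3 * x 0 + x 1 + x 2 + x 3 + x 4 + x 5 + x 6 := by
  rw [Ip_eval]
  simp only [show hcl 0 = 3 from rfl, show hcl 1 = -1 from rfl, show hcl 2 = -1 from rfl,
    show hcl 3 = -1 from rfl, show hcl 4 = -1 from rfl, show hcl 5 = -1 from rfl,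
    show hcl 6 = -1 from rfl]
  ring

lemma Ipδ (x : Fin 7 → ℤ) : Ip δv x = 2 * x 0 + x 1 + x 2 + x 3 + x 4 + x 5 + x 6 := by
  rw [Ip_eval]
  simp only [show δv 0 = 2 from rfl, show δv 1 = -1 from rfl, show δv 2 = -1 from rfl,
    show δv 3 = -1 from rfl, show δv 4 = -1 from rfl, show δv 5 = -1 from rfl,
    show δv 6 = -1 from rfl]
  ring

lemma sδ_apply (β : Fin 7 → ℤ) (i : Fin 7) : sδ β i = β i + Ip δv β * δv i := rfl

lemma Ipδ_sδ (β : Fin 7 → ℤ) : Ip δv (sδ β) = - Ip δv β := by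
  rw [Ipδ (sδ β)]
  simp only [sδ_apply]
  rw [Ipδ β]
  simp only [show δv 0 = 2 from rfl, show δv 1 = -1 from rfl, show δv 2 = -1 from rfl,
    show δv 3 = -1 from rfl, show δv 4 = -1 from rfl, show δv 5 = -1 from rfl,
    show δv 6 = -1 from rfl]
  ring

lemma sδ_sδ (β : Fin 7 → ℤ) : sδ (sδ β) = β := by
  funext i
  have : sδ (sδ β) i = sδ β i + Ip δv (sδ β) * δv i := rfl
  rw [this, Ipδ_sδ, sδ_apply]
  ring

lemma vec_eq_of (α : Fin 7 → ℤ) {a0 a1 a2 a3 a4 a5 a6 : ℤ}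
    (h0 : α 0 = a0) (h1 : α 1 = a1) (h2 : α 2 = a2) (h3 : α 3 = a3)
    (h4 : α 4 = a4) (h5 : α 5 = a5) (h6 : α 6 = a6) :
    α = ![a0, a1, a2, a3, a4, a5, a6] := by
  funext i; fin_cases i <;> assumption

lemma abs_le_two (a : ℤ) (h : a * a ≤ 6) : -2 ≤ a ∧ a ≤ 2 :=
  ⟨by nlinarith, by nlinarith⟩

lemma CS6 (a b c d e f : ℤ) :
    (a+b+c+d+e+f)*(a+b+c+d+e+f) ≤ 6*(a*a+b*b+c*c+d*d+e*e+f*f) := by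
  nlinarith [sq_nonneg (a-b), sq_nonneg (a-c), sq_nonneg (a-d), sq_nonneg (a-e), sq_nonneg (a-f),
    sq_nonneg (b-c), sq_nonneg (b-d), sq_nonneg (b-e), sq_nonneg (b-f),
    sq_nonneg (c-d), sq_nonneg (c-e), sq_nonneg (c-f),
    sq_nonneg (d-e), sq_nonneg (d-f), sq_nonneg (e-f)]

lemma sq5 (b : ℤ) (hl : -2 ≤ b) (hr : b ≤ 2) :
    ∃ c, b * b = c ∧ ((b = -2 ∧ c = 4) ∨ (b = -1 ∧ c = 1) ∨ (b = 0 ∧ c = 0) ∨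
      (b = 1 ∧ c = 1) ∨ (b = 2 ∧ c = 4)) :=
  ⟨b * b, rfl, by interval_cases b <;> norm_num⟩


def s3 : Finset ℤ := {-1, 0, 1}

lemma abs_le_one (a : ℤ) (h : a * a ≤ 3) : -1 ≤ a ∧ a ≤ 1 :=
  ⟨by nlinarith, by nlinarith⟩

lemma sqz (a c : ℤ) (h : (a + c) ^ 2 ≤ 0) : a = -c := by nlinarith [sq_nonneg (a + c)]

lemma sqz2 (a c : ℤ) (h : (a - c) ^ 2 ≤ 0) : a = c := by nlinarith [sq_nonneg (a - c)]

lemma key_m1 : ∀ b1 ∈ s3, ∀ b2 ∈ s3, ∀ b3 ∈ s3, ∀ b4 ∈ s3, ∀ b5 ∈ s3, ∀ b6 ∈ s3,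
    b1 + b2 + b3 + b4 + b5 + b6 = 3 →
    b1*b1 + b2*b2 + b3*b3 + b4*b4 + b5*b5 + b6*b6 = 3 →
    ![-1, b1, b2, b3, b4, b5, b6] ∈ roots72 := by decide

lemma key_0 : ∀ b1 ∈ s3, ∀ b2 ∈ s3, ∀ b3 ∈ s3, ∀ b4 ∈ s3, ∀ b5 ∈ s3, ∀ b6 ∈ s3,
    b1 + b2 + b3 + b4 + b5 + b6 = 0 →
    b1*b1 + b2*b2 + b3*b3 + b4*b4 + b5*b5 + b6*b6 = 2 →
    ![0, b1, b2, b3, b4, b5, b6] ∈ roots72 := by decide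

lemma key_p1 : ∀ b1 ∈ s3, ∀ b2 ∈ s3, ∀ b3 ∈ s3, ∀ b4 ∈ s3, ∀ b5 ∈ s3, ∀ b6 ∈ s3,
    b1 + b2 + b3 + b4 + b5 + b6 = -3 →
    b1*b1 + b2*b2 + b3*b3 + b4*b4 + b5*b5 + b6*b6 = 3 →
    ![1, b1, b2, b3, b4, b5, b6] ∈ roots72 := by decide

lemma classify (α : Fin 7 → ℤ) (h1 : Ip α α = -2) (h2 : Ip α hcl = 0) : α ∈ roots72 := by
  rw [Ip_eval] at h1
  rw [Iph] at h2
  have hcs := CS6 (α 1) (α 2) (α 3) (α 4) (α 5) (α 6)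
  have h9 : α 1 + α 2 + α 3 + α 4 + α 5 + α 6 = -3 * α 0 := by linarith
  rw [h9] at hcs
  have hsq0 : α 0 * α 0 ≤ 4 := by nlinarith
  have h5 : α 0 = -2 ∨ α 0 = -1 ∨ α 0 = 0 ∨ α 0 = 1 ∨ α 0 = 2 := by
    have := abs_le_two _ (by linarith : α 0 * α 0 ≤ 6)
    omega
  clear hcs hsq0 h9
  rcases h5 with e0 | e0 | e0 | e0 | e0 <;> rw [e0] at h1 h2
  · -- α 0 = -2
    have q : (α 1 - 1)^2 + (α 2 - 1)^2 + (α 3 - 1)^2 + (α 4 - 1)^2 + (α 5 - 1)^2 + (α 6 - 1)^2 = 0 := by linear_combination -h1 - 2 * h2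
    have e1 : α 1 = 1 := sqz2 _ 1 (by linarith [q, sq_nonneg (α 2 - 1), sq_nonneg (α 3 - 1), sq_nonneg (α 4 - 1), sq_nonneg (α 5 - 1), sq_nonneg (α 6 - 1)])
    have e2 : α 2 = 1 := sqz2 _ 1 (by linarith [q, sq_nonneg (α 1 - 1), sq_nonneg (α 3 - 1), sq_nonneg (α 4 - 1), sq_nonneg (α 5 - 1), sq_nonneg (α 6 - 1)])
    have e3 : α 3 = 1 := sqz2 _ 1 (by linarith [q, sq_nonneg (α 1 - 1), sq_nonneg (α 2 - 1), sq_nonneg (α 4 - 1), sq_nonneg (α 5 - 1), sq_nonneg (α 6 - 1)])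
    have e4 : α 4 = 1 := sqz2 _ 1 (by linarith [q, sq_nonneg (α 1 - 1), sq_nonneg (α 2 - 1), sq_nonneg (α 3 - 1), sq_nonneg (α 5 - 1), sq_nonneg (α 6 - 1)])
    have e5 : α 5 = 1 := sqz2 _ 1 (by linarith [q, sq_nonneg (α 1 - 1), sq_nonneg (α 2 - 1), sq_nonneg (α 3 - 1), sq_nonneg (α 4 - 1), sq_nonneg (α 6 - 1)])
    have e6 : α 6 = 1 := sqz2 _ 1 (by linarith [q, sq_nonneg (α 1 - 1), sq_nonneg (α 2 - 1), sq_nonneg (α 3 - 1), sq_nonneg (α 4 - 1), sq_nonneg (α 5 - 1)])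
    rw [vec_eq_of α e0 e1 e2 e3 e4 e5 e6]; decide
  · -- α 0 = -1
    have hm1 : α 1 ∈ s3 := by
      have h := abs_le_one (α 1) (by linarith [sq_nonneg (α 2), sq_nonneg (α 3), sq_nonneg (α 4), sq_nonneg (α 5), sq_nonneg (α 6)])
      simp only [s3, Finset.mem_insert, Finset.mem_singleton]
      omega
    have hm2 : α 2 ∈ s3 := by
      have h := abs_le_one (α 2) (by linarith [sq_nonneg (α 1), sq_nonneg (α 3), sq_nonneg (α 4), sq_nonneg (α 5), sq_nonneg (α 6)])
      simp only [s3, Finset.mem_insert, Finset.mem_singleton]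
      omega
    have hm3 : α 3 ∈ s3 := by
      have h := abs_le_one (α 3) (by linarith [sq_nonneg (α 1), sq_nonneg (α 2), sq_nonneg (α 4), sq_nonneg (α 5), sq_nonneg (α 6)])
      simp only [s3, Finset.mem_insert, Finset.mem_singleton]
      omega
    have hm4 : α 4 ∈ s3 := by
      have h := abs_le_one (α 4) (by linarith [sq_nonneg (α 1), sq_nonneg (α 2), sq_nonneg (α 3), sq_nonneg (α 5), sq_nonneg (α 6)])
      simp only [s3, Finset.mem_insert, Finset.mem_singleton]
      omega
    have hm5 : α 5 ∈ s3 := by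
      have h := abs_le_one (α 5) (by linarith [sq_nonneg (α 1), sq_nonneg (α 2), sq_nonneg (α 3), sq_nonneg (α 4), sq_nonneg (α 6)])
      simp only [s3, Finset.mem_insert, Finset.mem_singleton]
      omega
    have hm6 : α 6 ∈ s3 := by
      have h := abs_le_one (α 6) (by linarith [sq_nonneg (α 1), sq_nonneg (α 2), sq_nonneg (α 3), sq_nonneg (α 4), sq_nonneg (α 5)])
      simp only [s3, Finset.mem_insert, Finset.mem_singleton]
      omega
    rw [vec_eq_of α e0 rfl rfl rfl rfl rfl rfl]
    exact key_m1 _ hm1 _ hm2 _ hm3 _ hm4 _ hm5 _ hm6 (by linarith) (by linarith)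
  · -- α 0 = 0
    have hm1 : α 1 ∈ s3 := by
      have h := abs_le_one (α 1) (by linarith [sq_nonneg (α 2), sq_nonneg (α 3), sq_nonneg (α 4), sq_nonneg (α 5), sq_nonneg (α 6)])
      simp only [s3, Finset.mem_insert, Finset.mem_singleton]
      omega
    have hm2 : α 2 ∈ s3 := by
      have h := abs_le_one (α 2) (by linarith [sq_nonneg (α 1), sq_nonneg (α 3), sq_nonneg (α 4), sq_nonneg (α 5), sq_nonneg (α 6)])
      simp only [s3, Finset.mem_insert, Finset.mem_singleton]
      omega
    have hm3 : α 3 ∈ s3 := by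
      have h := abs_le_one (α 3) (by linarith [sq_nonneg (α 1), sq_nonneg (α 2), sq_nonneg (α 4), sq_nonneg (α 5), sq_nonneg (α 6)])
      simp only [s3, Finset.mem_insert, Finset.mem_singleton]
      omega
    have hm4 : α 4 ∈ s3 := by
      have h := abs_le_one (α 4) (by linarith [sq_nonneg (α 1), sq_nonneg (α 2), sq_nonneg (α 3), sq_nonneg (α 5), sq_nonneg (α 6)])
      simp only [s3, Finset.mem_insert, Finset.mem_singleton]
      omega
    have hm5 : α 5 ∈ s3 := by
      have h := abs_le_one (α 5) (by linarith [sq_nonneg (α 1), sq_nonneg (α 2), sq_nonneg (α 3), sq_nonneg (α 4), sq_nonneg (α 6)])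
      simp only [s3, Finset.mem_insert, Finset.mem_singleton]
      omega
    have hm6 : α 6 ∈ s3 := by
      have h := abs_le_one (α 6) (by linarith [sq_nonneg (α 1), sq_nonneg (α 2), sq_nonneg (α 3), sq_nonneg (α 4), sq_nonneg (α 5)])
      simp only [s3, Finset.mem_insert, Finset.mem_singleton]
      omega
    rw [vec_eq_of α e0 rfl rfl rfl rfl rfl rfl]
    exact key_0 _ hm1 _ hm2 _ hm3 _ hm4 _ hm5 _ hm6 (by linarith) (by linarith)
  · -- α 0 = 1
    have hm1 : α 1 ∈ s3 := by
      have h := abs_le_one (α 1) (by linarith [sq_nonneg (α 2), sq_nonneg (α 3), sq_nonneg (α 4), sq_nonneg (α 5), sq_nonneg (α 6)])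
      simp only [s3, Finset.mem_insert, Finset.mem_singleton]
      omega
    have hm2 : α 2 ∈ s3 := by
      have h := abs_le_one (α 2) (by linarith [sq_nonneg (α 1), sq_nonneg (α 3), sq_nonneg (α 4), sq_nonneg (α 5), sq_nonneg (α 6)])
      simp only [s3, Finset.mem_insert, Finset.mem_singleton]
      omega
    have hm3 : α 3 ∈ s3 := by
      have h := abs_le_one (α 3) (by linarith [sq_nonneg (α 1), sq_nonneg (α 2), sq_nonneg (α 4), sq_nonneg (α 5), sq_nonneg (α 6)])
      simp only [s3, Finset.mem_insert, Finset.mem_singleton]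
      omega
    have hm4 : α 4 ∈ s3 := by
      have h := abs_le_one (α 4) (by linarith [sq_nonneg (α 1), sq_nonneg (α 2), sq_nonneg (α 3), sq_nonneg (α 5), sq_nonneg (α 6)])
      simp only [s3, Finset.mem_insert, Finset.mem_singleton]
      omega
    have hm5 : α 5 ∈ s3 := by
      have h := abs_le_one (α 5) (by linarith [sq_nonneg (α 1), sq_nonneg (α 2), sq_nonneg (α 3), sq_nonneg (α 4), sq_nonneg (α 6)])
      simp only [s3, Finset.mem_insert, Finset.mem_singleton]
      omega
    have hm6 : α 6 ∈ s3 := by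
      have h := abs_le_one (α 6) (by linarith [sq_nonneg (α 1), sq_nonneg (α 2), sq_nonneg (α 3), sq_nonneg (α 4), sq_nonneg (α 5)])
      simp only [s3, Finset.mem_insert, Finset.mem_singleton]
      omega
    rw [vec_eq_of α e0 rfl rfl rfl rfl rfl rfl]
    exact key_p1 _ hm1 _ hm2 _ hm3 _ hm4 _ hm5 _ hm6 (by linarith) (by linarith)
  · -- α 0 = 2
    have q : (α 1 + 1)^2 + (α 2 + 1)^2 + (α 3 + 1)^2 + (α 4 + 1)^2 + (α 5 + 1)^2 + (α 6 + 1)^2 = 0 := by linear_combination -h1 + 2 * h2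
    have e1 : α 1 = -1 := sqz _ 1 (by linarith [q, sq_nonneg (α 2 + 1), sq_nonneg (α 3 + 1), sq_nonneg (α 4 + 1), sq_nonneg (α 5 + 1), sq_nonneg (α 6 + 1)])
    have e2 : α 2 = -1 := sqz _ 1 (by linarith [q, sq_nonneg (α 1 + 1), sq_nonneg (α 3 + 1), sq_nonneg (α 4 + 1), sq_nonneg (α 5 + 1), sq_nonneg (α 6 + 1)])
    have e3 : α 3 = -1 := sqz _ 1 (by linarith [q, sq_nonneg (α 1 + 1), sq_nonneg (α 2 + 1), sq_nonneg (α 4 + 1), sq_nonneg (α 5 + 1), sq_nonneg (α 6 + 1)])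
    have e4 : α 4 = -1 := sqz _ 1 (by linarith [q, sq_nonneg (α 1 + 1), sq_nonneg (α 2 + 1), sq_nonneg (α 3 + 1), sq_nonneg (α 5 + 1), sq_nonneg (α 6 + 1)])
    have e5 : α 5 = -1 := sqz _ 1 (by linarith [q, sq_nonneg (α 1 + 1), sq_nonneg (α 2 + 1), sq_nonneg (α 3 + 1), sq_nonneg (α 4 + 1), sq_nonneg (α 6 + 1)])
    have e6 : α 6 = -1 := sqz _ 1 (by linarith [q, sq_nonneg (α 1 + 1), sq_nonneg (α 2 + 1), sq_nonneg (α 3 + 1), sq_nonneg (α 4 + 1), sq_nonneg (α 5 + 1)])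
    rw [vec_eq_of α e0 e1 e2 e3 e4 e5 e6]; decide

lemma Rset_eq : Rset = (roots72 : Set (Fin 7 → ℤ)) := by
  have D : ∀ α ∈ roots72, Ip α α = -2 ∧ Ip α hcl = 0 := by decide
  ext α
  constructor
  · rintro ⟨h1, h2⟩
    exact Finset.mem_coe.2 (classify α h1 h2)
  · intro h
    exact D α (Finset.mem_coe.1 h)

def orbF : Finset (Finset (Fin 7 → ℤ)) := roots72.image (fun α => {α, sδ α})

lemma coe_pair (a b : Fin 7 → ℤ) : (({a, b} : Finset (Fin 7 → ℤ)) : Set (Fin 7 → ℤ)) = {a, b} := by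
  simp

lemma OrbA : Orb = (fun s : Finset (Fin 7 → ℤ) => (s : Set (Fin 7 → ℤ))) '' (orbF : Set (Finset (Fin 7 → ℤ))) := by
  ext S
  constructor
  · rintro ⟨α, hα, rfl⟩
    have hm : α ∈ roots72 := by rw [Rset_eq] at hα; exact Finset.mem_coe.1 hα
    exact ⟨{α, sδ α}, Finset.mem_coe.2 (Finset.mem_image_of_mem _ hm), coe_pair _ _⟩
  · rintro ⟨s, hs, rfl⟩
    obtain ⟨α, hα, rfl⟩ := Finset.mem_image.1 (Finset.mem_coe.1 hs)
    refine ⟨α, ?_, coe_pair _ _⟩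
    rw [Rset_eq]
    exact Finset.mem_coe.2 hα

lemma sδδ : sδ δv = -δv := by decide

lemma sδnδ : sδ (-δv) = δv := by decide

def pairF : Finset (Fin 7 → ℤ) := {δv, -δv}

def fix30 : Finset (Fin 7 → ℤ) := roots72.filter (fun α => sδ α = α)

def orb20 : Finset (Finset (Fin 7 → ℤ)) :=
  orbF.filter (fun s => s ≠ pairF ∧ ∀ α ∈ s, sδ α ≠ α)

/-- The action of {id, s_δ} on the 72 roots has exactly 51 orbits: the orbit {δ, -δ},
30 fixed points (the roots e_i - e_j, i ≠ j), and 20 further two-element orbits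
(among the 40 roots ±(e₀ - e_i - e_j - e_k)). -/
theorem A1_monodromy_orbits :
    Orb.ncard = 51 ∧
    ({δv, -δv} : Set (Fin 7 → ℤ)) ∈ Orb ∧
    {α ∈ Rset | sδ α = α}
      = {α | ∃ i j : Fin 6, i ≠ j ∧ α = ee i.succ - ee j.succ} ∧
    {α ∈ Rset | sδ α = α}.ncard = 30 ∧
    {S ∈ Orb | S ≠ {δv, -δv} ∧ ∀ α ∈ S, sδ α ≠ α}.ncard = 20 ∧
    (∀ S ∈ Orb, S ≠ ({δv, -δv} : Set (Fin 7 → ℤ)) → ∀ α ∈ S, sδ α ≠ α →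
      ∃ i j k : Fin 6, i < j ∧ j < k ∧
        (α = ee 0 - ee i.succ - ee j.succ - ee k.succ ∨
         α = -(ee 0 - ee i.succ - ee j.succ - ee k.succ))) := by
  have hfixset : {α ∈ Rset | sδ α = α} = (fix30 : Set (Fin 7 → ℤ)) := by
    ext α
    simp only [Set.mem_setOf_eq, Finset.coe_filter, fix30, Rset_eq, Finset.mem_coe,
      Finset.mem_filter]
  refine ⟨?_, ?_, ?_, ?_, ?_, ?_⟩
  · -- 51 orbits
    rw [OrbA, Set.ncard_image_of_injective _ Finset.coe_injective, Set.ncard_coe_finset]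
    decide
  · -- {δ, -δ} is an orbit
    refine ⟨δv, ⟨by decide, by decide⟩, ?_⟩
    rw [sδδ]
  · -- fixed points are the e_i - e_j
    have D1 : ∀ α ∈ roots72, sδ α = α → ∃ i j : Fin 6, i ≠ j ∧ α = ee i.succ - ee j.succ := by
      decide
    have D2 : ∀ i j : Fin 6, i ≠ j →
        (ee i.succ - ee j.succ) ∈ roots72 ∧ sδ (ee i.succ - ee j.succ) = ee i.succ - ee j.succ := by
      decide
    ext α
    simp only [Set.mem_setOf_eq]
    constructor
    · rintro ⟨hR, hfix⟩
      rw [Rset_eq] at hR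
      exact D1 α (Finset.mem_coe.1 hR) hfix
    · rintro ⟨i, j, hij, rfl⟩
      obtain ⟨hm, hf⟩ := D2 i j hij
      refine ⟨?_, hf⟩
      rw [Rset_eq]
      exact Finset.mem_coe.2 hm
  · -- 30 fixed points
    rw [hfixset, Set.ncard_coe_finset]
    decide
  · -- 20 free two-element orbits
    have hset : {S ∈ Orb | S ≠ {δv, -δv} ∧ ∀ α ∈ S, sδ α ≠ α}
        = (fun s : Finset (Fin 7 → ℤ) => (s : Set (Fin 7 → ℤ))) '' (orb20 : Set (Finset (Fin 7 → ℤ))) := by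
      have hpair : (pairF : Set (Fin 7 → ℤ)) = {δv, -δv} := coe_pair _ _
      ext S
      constructor
      · rintro ⟨hS, hne, hfix⟩
        rw [OrbA] at hS
        obtain ⟨s, hs, rfl⟩ := hS
        refine ⟨s, Finset.mem_coe.2 (Finset.mem_filter.2 ⟨Finset.mem_coe.1 hs, ?_, ?_⟩), rfl⟩
        · rintro rfl
          exact hne hpair
        · intro α hα
          exact hfix α (Finset.mem_coe.2 hα)
      · rintro ⟨s, hs, rfl⟩
        obtain ⟨hs1, hs2, hs3⟩ := Finset.mem_filter.1 (Finset.mem_coe.1 hs)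
        refine ⟨?_, ?_, ?_⟩
        · rw [OrbA]
          exact ⟨s, Finset.mem_coe.2 hs1, rfl⟩
        · intro h
          exact hs2 (Finset.coe_injective (by rw [hpair]; exact h))
        · intro α hα
          exact hs3 α (Finset.mem_coe.1 hα)
    rw [hset, Set.ncard_image_of_injective _ Finset.coe_injective, Set.ncard_coe_finset]
    decide
  · -- the non-fixed, non-δ orbits consist of ±(e₀ - e_i - e_j - e_k)
    have DC : ∀ α ∈ roots72, sδ α ∈ roots72 := by decide
    have DF : ∀ α ∈ roots72, sδ α ≠ α → α ≠ δv → α ≠ -δv →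
        ∃ i j k : Fin 6, i < j ∧ j < k ∧
          (α = ee 0 - ee i.succ - ee j.succ - ee k.succ ∨
           α = -(ee 0 - ee i.succ - ee j.succ - ee k.succ)) := by
      decide
    rintro S ⟨α₀, hα₀, rfl⟩ hne α hα hfix
    have hm0 : α₀ ∈ roots72 := by
      rw [Rset_eq] at hα₀; exact Finset.mem_coe.1 hα₀
    simp only [Set.mem_insert_iff, Set.mem_singleton_iff] at hα
    have hmα : α ∈ roots72 := by
      rcases hα with rfl | rfl
      · exact hm0
      · exact DC α₀ hm0
    have hd1 : α ≠ δv := by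
      rintro rfl
      rcases hα with h | h
      · apply hne
        rw [← h, sδδ]
      · apply hne
        have : α₀ = -δv := by rw [← sδ_sδ α₀, ← h, sδδ]
        rw [this, sδnδ, Set.pair_comm]
    have hd2 : α ≠ -δv := by
      rintro rfl
      rcases hα with h | h
      · apply hne
        rw [← h, sδnδ, Set.pair_comm]
      · apply hne
        have : α₀ = δv := by rw [← sδ_sδ α₀, ← h, sδnδ]
        rw [this, sδδ]
    exact DF α hmα hfix hd1 hd2
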